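/- If X and X' are i.i.d. real random variables with x^{1+2α} · P(|X X'| ≥ √(x log x)) → 0 as x → ∞ for some α > 0, then E[|X X'|^{2+4α} / (1 + log⁺|X X'|)^{4+4α}] < ∞. -/

import Mathlib

open MeasureTheory ProbabilityTheory Filter

noncomputable def aa (N n : ℕ) : ℝ := Real.sqrt (Real.exp ((N:ℝ) + n) * ((N:ℝ) + n))

lemma one_le_m (N n : ℕ) (hN : 1 ≤ N) : (1:ℝ) ≤ (N:ℝ) + n := by
  have h1 : (1:ℝ) ≤ (N:ℝ) := by exact_mod_cast hN
  have h2 : (0:ℝ) ≤ (n:ℝ) := Nat.cast_nonneg n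
  linarith

lemma aa_nonneg (N n : ℕ) : 0 ≤ aa N n := Real.sqrt_nonneg _

lemma one_le_aa (N n : ℕ) (hN : 1 ≤ N) : 1 ≤ aa N n := by
  have hm := one_le_m N n hN
  have he : (1:ℝ) ≤ Real.exp ((N:ℝ) + n) := Real.one_le_exp (by linarith)
  rw [aa, show (1:ℝ) = Real.sqrt 1 by simp]
  exact Real.sqrt_le_sqrt (by nlinarith)

lemma sqrt_le_aa (N n : ℕ) (hN : 1 ≤ N) : Real.sqrt n ≤ aa N n := by
  have hm := one_le_m N n hN
  have he : (1:ℝ) ≤ Real.exp ((N:ℝ) + n) := Real.one_le_exp (by linarith)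
  have h2 : (0:ℝ) ≤ (n:ℝ) := Nat.cast_nonneg n
  exact Real.sqrt_le_sqrt (by nlinarith)

lemma log_aa (N n : ℕ) (hN : 1 ≤ N) : ((N:ℝ) + n) / 2 ≤ 1 + Real.log (aa N n) := by
  have hm := one_le_m N n hN
  have he : (0:ℝ) < Real.exp ((N:ℝ) + n) := Real.exp_pos _
  rw [aa, Real.log_sqrt (by nlinarith), Real.log_mul (by positivity) (by linarith), Real.log_exp]
  have hlog : 0 ≤ Real.log ((N:ℝ) + n) := Real.log_nonneg hm
  linarith

lemma aa_rpow (N n : ℕ) (hN : 1 ≤ N) (α : ℝ) :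
    aa N n ^ (2 + 4*α) = (Real.exp ((N:ℝ) + n) * ((N:ℝ) + n)) ^ (1 + 2*α) := by
  have hm := one_le_m N n hN
  have ht : (0:ℝ) ≤ Real.exp ((N:ℝ) + n) * ((N:ℝ) + n) := by positivity
  rw [aa, Real.sqrt_eq_rpow, ← Real.rpow_mul ht]
  norm_num
  ring_nf

lemma key_bound (α : ℝ) (hα : 0 < α) (N : ℕ) (hN : 1 ≤ N) (n : ℕ) :
    aa N (n+1) ^ (2 + 4*α) / (1 + Real.log (aa N n)) ^ (4 + 4*α)
      * Real.exp ((N:ℝ) + n) ^ (-(1 + 2*α))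
    ≤ (Real.exp 1 * ((N:ℝ) + 1)) ^ (1 + 2*α) * 2 ^ (4 + 4*α) * ((n:ℝ) + 1) ^ (-(2:ℝ)) := by
  set m : ℝ := (N:ℝ) + n with hm_def
  have hm : 1 ≤ m := one_le_m N n hN
  have hn0 : (0:ℝ) ≤ (n:ℝ) := Nat.cast_nonneg n
  have hn1 : (1:ℝ) ≤ (n:ℝ) + 1 := by linarith
  have hNr : (1:ℝ) ≤ (N:ℝ) := by exact_mod_cast hN
  have hp : (0:ℝ) < 1 + 2*α := by linarith
  have he4 : (0:ℝ) < 4 + 4*α := by linarith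
  have hE : (0:ℝ) < Real.exp 1 := Real.exp_pos 1
  -- numerator identity
  have h1 : aa N (n+1) ^ (2 + 4*α) = (Real.exp (m+1) * (m+1)) ^ (1 + 2*α) := by
    have h := aa_rpow N (n+1) hN α
    have hc : ((N:ℝ) + ((n+1:ℕ):ℝ)) = m + 1 := by push_cast; ring
    rw [h, hc]
  -- denominator bound
  have hden : (((n:ℝ)+1)/2) ^ (4+4*α) ≤ (1 + Real.log (aa N n)) ^ (4+4*α) := by
    apply Real.rpow_le_rpow (by positivity) _ (by linarith)
    calc ((n:ℝ)+1)/2 ≤ m/2 := by rw [hm_def]; linarith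
      _ ≤ 1 + Real.log (aa N n) := log_aa N n hN
  have hdpos : (0:ℝ) < (((n:ℝ)+1)/2) ^ (4+4*α) := Real.rpow_pos_of_pos (by positivity) _
  have step1 : aa N (n+1) ^ (2 + 4*α) / (1 + Real.log (aa N n)) ^ (4 + 4*α)
      * Real.exp m ^ (-(1 + 2*α))
      ≤ (Real.exp (m+1) * (m+1)) ^ (1 + 2*α) / (((n:ℝ)+1)/2) ^ (4+4*α)
        * Real.exp m ^ (-(1 + 2*α)) := by
    rw [h1]
    have hnum : (0:ℝ) ≤ (Real.exp (m+1) * (m+1)) ^ (1 + 2*α) :=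
      Real.rpow_nonneg (by positivity) _
    gcongr
  -- algebraic identity
  have hexp : Real.exp (m+1) = Real.exp m * Real.exp 1 := by rw [← Real.exp_add]
  have hsplit : (Real.exp (m+1) * (m+1)) ^ (1+2*α)
      = Real.exp m ^ (1+2*α) * (Real.exp 1 * (m+1)) ^ (1+2*α) := by
    rw [hexp, mul_assoc, Real.mul_rpow (Real.exp_pos m).le (by positivity)]
  have hneg : Real.exp m ^ (-(1+2*α)) = (Real.exp m ^ (1+2*α))⁻¹ :=
    Real.rpow_neg (Real.exp_pos m).le _
  have hdiv : (((n:ℝ)+1)/2) ^ (4+4*α) = ((n:ℝ)+1) ^ (4+4*α) / 2 ^ (4+4*α) :=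
    Real.div_rpow (by positivity) (by norm_num : (0:ℝ) ≤ 2) _
  have hEmp : (0:ℝ) < Real.exp m ^ (1+2*α) := Real.rpow_pos_of_pos (Real.exp_pos m) _
  have hnp : (0:ℝ) < ((n:ℝ)+1) ^ (4+4*α) := Real.rpow_pos_of_pos (by positivity) _
  have h2p : (0:ℝ) < (2:ℝ) ^ (4+4*α) := Real.rpow_pos_of_pos (by norm_num) _
  have step2 : (Real.exp (m+1) * (m+1)) ^ (1 + 2*α) / (((n:ℝ)+1)/2) ^ (4+4*α)
        * Real.exp m ^ (-(1 + 2*α))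
      = (Real.exp 1 * (m+1)) ^ (1+2*α) * 2 ^ (4+4*α) / ((n:ℝ)+1) ^ (4+4*α) := by
    rw [hsplit, hneg, hdiv]
    field_simp
  -- final bounds
  have h3 : (Real.exp 1 * (m+1)) ^ (1+2*α)
      ≤ (Real.exp 1 * ((N:ℝ)+1)) ^ (1+2*α) * ((n:ℝ)+1) ^ (1+2*α) := by
    rw [← Real.mul_rpow (by positivity) (by positivity)]
    apply Real.rpow_le_rpow (by positivity) _ (by linarith)
    have : m + 1 ≤ ((N:ℝ)+1) * ((n:ℝ)+1) := by rw [hm_def]; nlinarith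
    nlinarith
  have h4 : ((n:ℝ)+1) ^ (1+2*α) / ((n:ℝ)+1) ^ (4+4*α) ≤ ((n:ℝ)+1) ^ (-(2:ℝ)) := by
    rw [← Real.rpow_sub (by positivity)]
    exact Real.rpow_le_rpow_of_exponent_le hn1 (by linarith)
  calc aa N (n+1) ^ (2 + 4*α) / (1 + Real.log (aa N n)) ^ (4 + 4*α)
      * Real.exp ((N:ℝ) + n) ^ (-(1 + 2*α))
      ≤ (Real.exp (m+1) * (m+1)) ^ (1 + 2*α) / (((n:ℝ)+1)/2) ^ (4+4*α)
        * Real.exp m ^ (-(1 + 2*α)) := step1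
    _ = (Real.exp 1 * (m+1)) ^ (1+2*α) * 2 ^ (4+4*α) / ((n:ℝ)+1) ^ (4+4*α) := step2
    _ ≤ (Real.exp 1 * ((N:ℝ)+1)) ^ (1+2*α) * ((n:ℝ)+1) ^ (1+2*α) * 2 ^ (4+4*α)
        / ((n:ℝ)+1) ^ (4+4*α) := by gcongr
    _ = (Real.exp 1 * ((N:ℝ)+1)) ^ (1+2*α) * 2 ^ (4+4*α)
        * (((n:ℝ)+1) ^ (1+2*α) / ((n:ℝ)+1) ^ (4+4*α)) := by ring
    _ ≤ (Real.exp 1 * ((N:ℝ)+1)) ^ (1+2*α) * 2 ^ (4+4*α) * ((n:ℝ)+1) ^ (-(2:ℝ)) := by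
        gcongr

lemma pointwise_bound (α : ℝ) (hα : 0 < α) (N : ℕ) (hN : 1 ≤ N) (y : ℝ) (hy : 0 ≤ y) :
    y ^ (2 + 4*α) / (1 + max (Real.log y) 0) ^ (4 + 4*α) ≤ aa N 0 ^ (2 + 4*α) ∨
    ∃ n, aa N n ≤ y ∧ y ^ (2 + 4*α) / (1 + max (Real.log y) 0) ^ (4 + 4*α)
      ≤ aa N (n+1) ^ (2 + 4*α) / (1 + Real.log (aa N n)) ^ (4 + 4*α) := by
  classical
  by_cases hcase : y < aa N 0
  · left
    have hd1 : (1:ℝ) ≤ (1 + max (Real.log y) 0) ^ (4 + 4*α) := by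
      apply Real.one_le_rpow _ (by linarith)
      have := le_max_right (Real.log y) (0:ℝ)
      linarith
    calc y ^ (2 + 4*α) / (1 + max (Real.log y) 0) ^ (4 + 4*α)
        ≤ y ^ (2 + 4*α) := div_le_self (Real.rpow_nonneg hy _) hd1
      _ ≤ aa N 0 ^ (2 + 4*α) := Real.rpow_le_rpow hy hcase.le (by linarith)
  · push_neg at hcase
    right
    have hex : ∃ k, y < aa N (k+1) := by
      refine ⟨⌈y^2⌉₊, ?_⟩
      have h1 : Real.sqrt ((⌈y^2⌉₊ + 1 : ℕ) : ℝ) ≤ aa N (⌈y^2⌉₊ + 1) := by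
        exact sqrt_le_aa N (⌈y^2⌉₊ + 1) hN
      have h2 : y < Real.sqrt ((⌈y^2⌉₊ + 1 : ℕ) : ℝ) := by
        rw [Real.lt_sqrt hy]
        push_cast
        have := Nat.le_ceil (y^2)
        linarith
      linarith
    refine ⟨Nat.find hex, ?_, ?_⟩
    · rcases Nat.eq_zero_or_pos (Nat.find hex) with h0 | hpos
      · rw [h0]; exact hcase
      · obtain ⟨k, hk⟩ := Nat.exists_eq_succ_of_ne_zero hpos.ne'
        have hmin := Nat.find_min hex (m := k) (by omega)
        push_neg at hmin
        rw [hk]; exact hmin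
    · have hlt : y < aa N (Nat.find hex + 1) := Nat.find_spec hex
      have hge : aa N (Nat.find hex) ≤ y := by
        rcases Nat.eq_zero_or_pos (Nat.find hex) with h0 | hpos
        · rw [h0]; exact hcase
        · obtain ⟨k, hk⟩ := Nat.exists_eq_succ_of_ne_zero hpos.ne'
          have hmin := Nat.find_min hex (m := k) (by omega)
          push_neg at hmin
          rw [hk]; exact hmin
      have haan : (1:ℝ) ≤ aa N (Nat.find hex) := one_le_aa N _ hN
      have hlogle : Real.log (aa N (Nat.find hex)) ≤ max (Real.log y) 0 :=
        le_max_of_le_left (Real.log_le_log (by linarith) hge)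
      have hd2 : (0:ℝ) < 1 + Real.log (aa N (Nat.find hex)) := by
        linarith [Real.log_nonneg haan]
      exact div_le_div₀ (Real.rpow_nonneg (aa_nonneg _ _) _)
        (Real.rpow_le_rpow hy hlt.le (by linarith))
        (Real.rpow_pos_of_pos hd2 _)
        (Real.rpow_le_rpow hd2.le (by linarith) (by linarith))

/-- Step toward Lemma 6.4: the tail decay condition on the product `X X'` implies
the truncated-moment finiteness for the product. -/
theorem stmt_3 {Ω : Type*} [MeasureSpace Ω] [IsProbabilityMeasure (ℙ : Measure Ω)]
    (X X' : Ω → ℝ) (hX : Measurable X) (hX' : Measurable X')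
    (hindep : IndepFun X X' ℙ) (hid : Measure.map X ℙ = Measure.map X' ℙ)
    (α : ℝ) (hα : 0 < α)
    (htail : Tendsto (fun x : ℝ =>
        x ^ (1 + 2 * α) * (ℙ {ω | Real.sqrt (x * Real.log x) ≤ |X ω * X' ω|}).toReal)
      atTop (nhds 0)) :
    Integrable (fun ω =>
      |X ω * X' ω| ^ (2 + 4 * α) / (1 + max (Real.log |X ω * X' ω|) 0) ^ (4 + 4 * α)) ℙ := by
  classical
  obtain ⟨x₀, hx₀⟩ : ∃ x₀ : ℝ, ∀ x ≥ x₀,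
      x ^ (1 + 2 * α) * (ℙ {ω | Real.sqrt (x * Real.log x) ≤ |X ω * X' ω|}).toReal ≤ 1 := by
    have h := htail.eventually (eventually_le_nhds (show (0:ℝ) < 1 by norm_num))
    exact eventually_atTop.mp h
  set N : ℕ := max 1 ⌈x₀⌉₊ with hN_def
  have hN1 : 1 ≤ N := le_max_left _ _
  have hx₀N : x₀ ≤ (N:ℝ) := by
    have h1 : x₀ ≤ (⌈x₀⌉₊ : ℝ) := Nat.le_ceil x₀
    have h2 : ((⌈x₀⌉₊ : ℕ) : ℝ) ≤ (N:ℝ) := by exact_mod_cast le_max_right 1 ⌈x₀⌉₊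
    linarith
  set S : ℕ → Set Ω := fun n => {ω | aa N n ≤ |X ω * X' ω|} with hS_def
  have hSm : ∀ n, MeasurableSet (S n) := fun n =>
    measurableSet_le measurable_const ((hX.mul hX').abs)
  have hp : (0:ℝ) < 1 + 2*α := by linarith
  have hPS : ∀ n : ℕ, ℙ (S n) ≤ ENNReal.ofReal (Real.exp ((N:ℝ) + n) ^ (-(1 + 2*α))) := by
    intro n
    have hm1 : (1:ℝ) ≤ (N:ℝ) + n := one_le_m N n hN1
    have hxge : x₀ ≤ Real.exp ((N:ℝ) + n) := by
      have h2 := Real.add_one_le_exp ((N:ℝ) + n)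
      have h3 : (0:ℝ) ≤ (n:ℝ) := Nat.cast_nonneg n
      linarith
    have h := hx₀ (Real.exp ((N:ℝ) + n)) hxge
    rw [Real.log_exp] at h
    have hset : {ω | Real.sqrt (Real.exp ((N:ℝ) + n) * ((N:ℝ) + n)) ≤ |X ω * X' ω|} = S n := rfl
    rw [hset] at h
    have hppos : (0:ℝ) < Real.exp ((N:ℝ) + n) ^ (1 + 2*α) :=
      Real.rpow_pos_of_pos (Real.exp_pos _) _
    rw [ENNReal.le_ofReal_iff_toReal_le (measure_ne_top _ _)
      (Real.rpow_nonneg (Real.exp_pos _).le _)]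
    rw [Real.rpow_neg (Real.exp_pos _).le, inv_eq_one_div, le_div_iff₀ hppos]
    calc (ℙ (S n)).toReal * Real.exp ((N:ℝ) + n) ^ (1 + 2*α)
        = Real.exp ((N:ℝ) + n) ^ (1 + 2*α) * (ℙ (S n)).toReal := mul_comm _ _
      _ ≤ 1 := h
  set c : ℕ → ℝ := fun n =>
    aa N (n+1) ^ (2 + 4*α) / (1 + Real.log (aa N n)) ^ (4 + 4*α) with hc_def
  have hc0 : ∀ n, 0 ≤ c n := by
    intro n
    apply div_nonneg (Real.rpow_nonneg (aa_nonneg _ _) _)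
    apply Real.rpow_nonneg
    have h1 := log_aa N n hN1
    have h2 := one_le_m N n hN1
    linarith
  set D : ℝ := (Real.exp 1 * ((N:ℝ) + 1)) ^ (1 + 2*α) * 2 ^ (4 + 4*α) with hD_def
  have hD0 : 0 ≤ D :=
    mul_nonneg (Real.rpow_nonneg (by positivity) _) (Real.rpow_nonneg (by norm_num) _)
  have hfnn : ∀ ω, 0 ≤ |X ω * X' ω| ^ (2 + 4 * α)
      / (1 + max (Real.log |X ω * X' ω|) 0) ^ (4 + 4 * α) := by
    intro ω
    apply div_nonneg (Real.rpow_nonneg (abs_nonneg _) _)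
    apply Real.rpow_nonneg
    have := le_max_right (Real.log |X ω * X' ω|) (0:ℝ)
    linarith
  have hfm : Measurable (fun ω => |X ω * X' ω| ^ (2 + 4 * α)
      / (1 + max (Real.log |X ω * X' ω|) 0) ^ (4 + 4 * α)) := by
    apply Measurable.div
    · exact ((hX.mul hX').abs).pow measurable_const
    · exact (measurable_const.add (((hX.mul hX').abs.log).max measurable_const)).pow measurable_const
  refine ⟨hfm.aestronglyMeasurable, ?_⟩
  rw [hasFiniteIntegral_iff_ofReal (ae_of_all _ hfnn)]
  have hpt : ∀ ω, ENNReal.ofReal (|X ω * X' ω| ^ (2 + 4 * α)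
        / (1 + max (Real.log |X ω * X' ω|) 0) ^ (4 + 4 * α))
      ≤ ENNReal.ofReal (aa N 0 ^ (2 + 4*α))
        + ∑' n, Set.indicator (S n) (fun _ => ENNReal.ofReal (c n)) ω := by
    intro ω
    rcases pointwise_bound α hα N hN1 (|X ω * X' ω|) (abs_nonneg _) with hb | ⟨n, hmem, hb⟩
    · exact le_trans (ENNReal.ofReal_le_ofReal hb) le_self_add
    · calc ENNReal.ofReal (|X ω * X' ω| ^ (2 + 4 * α)
            / (1 + max (Real.log |X ω * X' ω|) 0) ^ (4 + 4 * α))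
          ≤ ENNReal.ofReal (c n) := ENNReal.ofReal_le_ofReal hb
        _ = Set.indicator (S n) (fun _ => ENNReal.ofReal (c n)) ω := by
            rw [Set.indicator_of_mem (show ω ∈ S n from hmem)]
        _ ≤ ∑' k, Set.indicator (S k) (fun _ => ENNReal.ofReal (c k)) ω := ENNReal.le_tsum n
        _ ≤ _ := le_add_self
  have hsum : Summable (fun n : ℕ => D * ((n:ℝ) + 1) ^ (-(2:ℝ))) := by
    apply Summable.mul_left
    have h0 : Summable (fun n : ℕ => (n:ℝ) ^ (-(2:ℝ))) :=
      Real.summable_nat_rpow.mpr (by norm_num)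
    have h1 := (_root_.summable_nat_add_iff 1).mpr h0
    exact h1.congr fun n => by push_cast; ring_nf
  calc ∫⁻ ω, ENNReal.ofReal (|X ω * X' ω| ^ (2 + 4 * α)
        / (1 + max (Real.log |X ω * X' ω|) 0) ^ (4 + 4 * α)) ∂ℙ
      ≤ ∫⁻ ω, (ENNReal.ofReal (aa N 0 ^ (2 + 4*α))
          + ∑' n, Set.indicator (S n) (fun _ => ENNReal.ofReal (c n)) ω) ∂ℙ :=
        lintegral_mono hpt
    _ = ENNReal.ofReal (aa N 0 ^ (2 + 4*α)) + ∑' n, ENNReal.ofReal (c n) * ℙ (S n) := by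
        rw [lintegral_add_left measurable_const, lintegral_const, measure_univ, mul_one]
        congr 1
        rw [lintegral_tsum (fun n => ((measurable_const).indicator (hSm n)).aemeasurable)]
        exact tsum_congr fun n => by
          rw [lintegral_indicator (hSm n), setLIntegral_const]
    _ ≤ ENNReal.ofReal (aa N 0 ^ (2 + 4*α))
        + ∑' n : ℕ, ENNReal.ofReal (D * ((n:ℝ) + 1) ^ (-(2:ℝ))) := by
        gcongr with n
        calc ENNReal.ofReal (c n) * ℙ (S n)
            ≤ ENNReal.ofReal (c n) * ENNReal.ofReal (Real.exp ((N:ℝ) + n) ^ (-(1 + 2*α))) := by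
              gcongr
              exact hPS n
          _ = ENNReal.ofReal (c n * Real.exp ((N:ℝ) + n) ^ (-(1 + 2*α))) :=
              (ENNReal.ofReal_mul (hc0 n)).symm
          _ ≤ ENNReal.ofReal (D * ((n:ℝ) + 1) ^ (-(2:ℝ))) := by
              apply ENNReal.ofReal_le_ofReal
              rw [hc_def, hD_def]
              exact key_bound α hα N hN1 n
    _ < ⊤ := by
        rw [← ENNReal.ofReal_tsum_of_nonneg
          (fun n => mul_nonneg hD0 (Real.rpow_nonneg (by positivity) _)) hsum]
        exact ENNReal.add_lt_top.mpr ⟨ENNReal.ofReal_lt_top, ENNReal.ofReal_lt_top⟩
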